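/- Let a < b be real numbers, C > 0, and let f : [a,b] → ℝ be a C¹ function such that f(a) = f(b) = C², f(x) < C² for all x ∈ (a,b), f'(a) ≠ 0 and f'(b) ≠ 0. Then the improper integral ∫_a^b dx/√(C² - f(x)) is finite. -/

import Mathlib

open MeasureTheory

lemma aux_left_bound (a b C : ℝ) (hab : a < b)
    (f f' : ℝ → ℝ)
    (hderiv : ∀ x ∈ Set.Icc a b, HasDerivWithinAt f (f' x) (Set.Icc a b) x)
    (hcont : ContinuousOn f' (Set.Icc a b))
    (ha : f a = C ^ 2)
    (hlt : ∀ x ∈ Set.Ioo a b, f x < C ^ 2)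
    (hfa : f' a ≠ 0) :
    ∃ c > 0, ∃ δ > 0, a + δ < b ∧
      ∀ x ∈ Set.Ioo a (a + δ), c * (x - a) ≤ C ^ 2 - f x := by
  have hfc : ContinuousOn f (Set.Icc a b) := fun x hx => (hderiv x hx).continuousWithinAt
  have hε : 0 < |f' a| / 2 := by positivity
  obtain ⟨δ, hδ, hδ'⟩ := Metric.continuousWithinAt_iff.mp
    (hcont a ⟨le_refl a, hab.le⟩) (|f' a| / 2) hε
  set δ₀ := min δ (b - a) / 2 with hδ₀def
  have hminpos : 0 < min δ (b - a) := lt_min hδ (sub_pos.2 hab)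
  have hδ₀ : 0 < δ₀ := by positivity
  have hδ₀b : a + δ₀ < b := by
    have h1 : min δ (b - a) ≤ b - a := min_le_right _ _
    simp only [hδ₀def]; linarith
  have hδ₀δ : δ₀ < δ := by
    have h1 : min δ (b - a) ≤ δ := min_le_left _ _
    simp only [hδ₀def]; linarith
  -- MVT-based key claim
  have key : ∀ x ∈ Set.Ioo a (a + δ₀), ∃ y,
      f' y = (f x - f a) / (x - a) ∧ |f' y - f' a| < |f' a| / 2 ∧ f' y < 0 := by
    intro x hx
    have hxb : x < b := hx.2.trans hδ₀b
    obtain ⟨y, hy, hyeq⟩ := exists_hasDerivAt_eq_slope f f' hx.1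
      (hfc.mono (Set.Icc_subset_Icc le_rfl hxb.le))
      (fun z hz => (hderiv z ⟨hz.1.le, (hz.2.trans hxb).le⟩).hasDerivAt
        (Icc_mem_nhds hz.1 (hz.2.trans hxb)))
    have hyIcc : y ∈ Set.Icc a b := ⟨hy.1.le, (hy.2.trans hxb).le⟩
    have hdist : dist y a < δ := by
      rw [Real.dist_eq, abs_of_nonneg (by linarith [hy.1] : (0:ℝ) ≤ y - a)]
      have : y < x := hy.2
      have : x < a + δ₀ := hx.2
      linarith
    have hclose : |f' y - f' a| < |f' a| / 2 := by
      have := hδ' hyIcc hdist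
      rwa [Real.dist_eq] at this
    have hxIoo : x ∈ Set.Ioo a b := ⟨hx.1, hxb⟩
    have hneg : f' y < 0 := by
      rw [hyeq]
      exact div_neg_of_neg_of_pos (by linarith [hlt x hxIoo]) (by linarith [hx.1])
    exact ⟨y, hyeq, hclose, hneg⟩
  -- f' a < 0
  have hfa_neg : f' a < 0 := by
    rcases hfa.lt_or_gt with h | h
    · exact h
    · exfalso
      have hx₀ : a + δ₀ / 2 ∈ Set.Ioo a (a + δ₀) := ⟨by linarith, by linarith⟩
      obtain ⟨y, _, hclose, hneg⟩ := key _ hx₀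
      rw [abs_of_pos h] at hclose
      have := abs_lt.mp hclose
      linarith [this.1]
  refine ⟨-f' a / 2, by linarith, δ₀, hδ₀, hδ₀b, ?_⟩
  intro x hx
  obtain ⟨y, hyeq, hclose, _⟩ := key x hx
  rw [abs_of_neg hfa_neg] at hclose
  have h1 : f' y < f' a / 2 := by
    have := abs_lt.mp hclose
    linarith [this.2]
  have hxa : 0 < x - a := by linarith [hx.1]
  have h2 : (f x - f a) / (x - a) < f' a / 2 := hyeq ▸ h1
  rw [div_lt_iff₀ hxa] at h2
  nlinarith [h2, ha]

/-- If `f` is `C¹` on `[a,b]` with `f(a) = f(b) = C²`, `f < C²` on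
`(a,b)` and `f'(a), f'(b) ≠ 0`, then `∫_a^b dx/√(C² - f(x))` is finite. -/
theorem integral_one_div_sqrt_finite
    (a b C : ℝ) (hab : a < b) (hC : 0 < C)
    (f f' : ℝ → ℝ)
    (hderiv : ∀ x ∈ Set.Icc a b, HasDerivWithinAt f (f' x) (Set.Icc a b) x)
    (hcont : ContinuousOn f' (Set.Icc a b))
    (ha : f a = C ^ 2) (hb : f b = C ^ 2)
    (hlt : ∀ x ∈ Set.Ioo a b, f x < C ^ 2)
    (hfa : f' a ≠ 0) (hfb : f' b ≠ 0) :
    IntegrableOn (fun x => 1 / Real.sqrt (C ^ 2 - f x)) (Set.Ioo a b) volume := by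
  -- left endpoint bound
  obtain ⟨c₁, hc₁, δ₁, hδ₁, hδ₁b, hbound₁⟩ :=
    aux_left_bound a b C hab f f' hderiv hcont ha hlt hfa
  -- right endpoint via reflection
  have hmap : ∀ y ∈ Set.Icc a b, a + b - y ∈ Set.Icc a b :=
    fun y hy => ⟨by linarith [hy.2], by linarith [hy.1]⟩
  have hrefl : ContinuousOn (fun y : ℝ => a + b - y) (Set.Icc a b) :=
    (continuous_const.sub continuous_id).continuousOn
  have hgderiv : ∀ y ∈ Set.Icc a b,
      HasDerivWithinAt (fun z => f (a + b - z)) (-f' (a + b - y)) (Set.Icc a b) y := by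
    intro y hy
    have h1 : HasDerivWithinAt (fun z : ℝ => a + b - z) (-1) (Set.Icc a b) y := by
      simpa using (hasDerivWithinAt_id y (Set.Icc a b)).const_sub (a + b)
    have h2 := (hderiv (a + b - y) (hmap y hy)).comp y h1 (fun z hz => hmap z hz)
    simp only [mul_neg_one] at h2
    exact h2
  have hgcont : ContinuousOn (fun y : ℝ => -f' (a + b - y)) (Set.Icc a b) :=
    (hcont.comp hrefl hmap).neg
  have hga : f (a + b - a) = C ^ 2 := by rw [show a + b - a = b by ring, hb]
  have hglt : ∀ y ∈ Set.Ioo a b, f (a + b - y) < C ^ 2 :=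
    fun y hy => hlt _ ⟨by linarith [hy.2], by linarith [hy.1]⟩
  have hgfa : -f' (a + b - a) ≠ 0 := by
    rw [show a + b - a = b by ring]; exact neg_ne_zero.mpr hfb
  obtain ⟨c₂, hc₂, δ₂, hδ₂, hδ₂b, hbound₂⟩ :=
    aux_left_bound a b C hab (fun z => f (a + b - z)) (fun y => -f' (a + b - y))
      hgderiv hgcont hga hglt hgfa
  have hbound₂' : ∀ x ∈ Set.Ioo (b - δ₂) b, c₂ * (b - x) ≤ C ^ 2 - f x := by
    intro x hx
    have h := hbound₂ (a + b - x) ⟨by linarith [hx.2], by linarith [hx.1]⟩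
    have e1 : a + b - (a + b - x) = x := by ring
    have e2 : a + b - x - a = b - x := by ring
    rw [e1, e2] at h
    exact h
  -- basic facts
  have hfc : ContinuousOn f (Set.Icc a b) := fun x hx => (hderiv x hx).continuousWithinAt
  have hpos : ∀ x ∈ Set.Ioo a b, (0:ℝ) < C ^ 2 - f x :=
    fun x hx => sub_pos.2 (hlt x hx)
  have φcont : ContinuousOn (fun x => 1 / Real.sqrt (C ^ 2 - f x)) (Set.Ioo a b) := by
    apply ContinuousOn.div continuousOn_const
    · exact Real.continuous_sqrt.comp_continuousOn
        (continuousOn_const.sub (hfc.mono Set.Ioo_subset_Icc_self))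
    · exact fun x hx => (Real.sqrt_pos.mpr (hpos x hx)).ne'
  -- Piece 1 : near a
  have I1 : IntegrableOn (fun x => 1 / Real.sqrt (C ^ 2 - f x)) (Set.Ioo a (a + δ₁)) volume := by
    have h0 : IntervalIntegrable (fun x : ℝ => x ^ (-(1/2) : ℝ)) volume 0 δ₁ :=
      intervalIntegral.intervalIntegrable_rpow' (by norm_num)
    have h1 := (h0.comp_sub_right a).const_mul (Real.sqrt c₁)⁻¹
    have h2 : IntegrableOn (fun x : ℝ => (Real.sqrt c₁)⁻¹ * (x - a) ^ (-(1/2) : ℝ))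
        (Set.Ioo a (a + δ₁)) volume := by
      have h3 := h1.1
      rw [zero_add] at h3
      exact h3.mono_set (fun x hx => ⟨hx.1, by linarith [hx.2]⟩)
    refine h2.mono'
      ((φcont.mono (fun x hx => ⟨hx.1, hx.2.trans hδ₁b⟩)).aestronglyMeasurable
        measurableSet_Ioo) ?_
    rw [ae_restrict_iff' measurableSet_Ioo]
    filter_upwards with x hx
    have hxI : x ∈ Set.Ioo a b := ⟨hx.1, hx.2.trans hδ₁b⟩
    have h1' : 0 < C ^ 2 - f x := hpos x hxI
    have h2' : c₁ * (x - a) ≤ C ^ 2 - f x := hbound₁ x hx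
    have hxa : 0 < x - a := sub_pos.2 hx.1
    rw [Real.norm_eq_abs, abs_of_nonneg (by positivity)]
    have h4 : 0 < Real.sqrt (c₁ * (x - a)) := Real.sqrt_pos.2 (by positivity)
    have h5 : 1 / Real.sqrt (C ^ 2 - f x) ≤ 1 / Real.sqrt (c₁ * (x - a)) :=
      one_div_le_one_div_of_le h4 (Real.sqrt_le_sqrt h2')
    have h6 : Real.sqrt (c₁ * (x - a)) = Real.sqrt c₁ * Real.sqrt (x - a) :=
      Real.sqrt_mul hc₁.le _
    have h7 : (x - a) ^ (-(1/2) : ℝ) = (Real.sqrt (x - a))⁻¹ := by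
      rw [Real.rpow_neg hxa.le, Real.sqrt_eq_rpow]
    calc 1 / Real.sqrt (C ^ 2 - f x) ≤ 1 / Real.sqrt (c₁ * (x - a)) := h5
      _ = (Real.sqrt c₁)⁻¹ * (x - a) ^ (-(1/2) : ℝ) := by
          rw [h7, h6, one_div, mul_inv]
  -- Piece 3 : near b
  have I3 : IntegrableOn (fun x => 1 / Real.sqrt (C ^ 2 - f x)) (Set.Ioo (b - δ₂) b) volume := by
    have h0 : IntervalIntegrable (fun x : ℝ => x ^ (-(1/2) : ℝ)) volume 0 δ₂ :=
      intervalIntegral.intervalIntegrable_rpow' (by norm_num)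
    have h1 := (h0.comp_sub_left b).const_mul (Real.sqrt c₂)⁻¹
    have h2 : IntegrableOn (fun x : ℝ => (Real.sqrt c₂)⁻¹ * (b - x) ^ (-(1/2) : ℝ))
        (Set.Ioo (b - δ₂) b) volume := by
      have h3 := h1.2
      rw [sub_zero] at h3
      exact h3.mono_set (fun x hx => ⟨hx.1, hx.2.le⟩)
    refine h2.mono'
      ((φcont.mono (fun x hx => ⟨by linarith [hx.1], hx.2⟩)).aestronglyMeasurable
        measurableSet_Ioo) ?_
    rw [ae_restrict_iff' measurableSet_Ioo]
    filter_upwards with x hx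
    have hxI : x ∈ Set.Ioo a b := ⟨by linarith [hx.1], hx.2⟩
    have h1' : 0 < C ^ 2 - f x := hpos x hxI
    have h2' : c₂ * (b - x) ≤ C ^ 2 - f x := hbound₂' x hx
    have hxb : 0 < b - x := sub_pos.2 hx.2
    rw [Real.norm_eq_abs, abs_of_nonneg (by positivity)]
    have h4 : 0 < Real.sqrt (c₂ * (b - x)) := Real.sqrt_pos.2 (by positivity)
    have h5 : 1 / Real.sqrt (C ^ 2 - f x) ≤ 1 / Real.sqrt (c₂ * (b - x)) :=
      one_div_le_one_div_of_le h4 (Real.sqrt_le_sqrt h2')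
    have h6 : Real.sqrt (c₂ * (b - x)) = Real.sqrt c₂ * Real.sqrt (b - x) :=
      Real.sqrt_mul hc₂.le _
    have h7 : (b - x) ^ (-(1/2) : ℝ) = (Real.sqrt (b - x))⁻¹ := by
      rw [Real.rpow_neg hxb.le, Real.sqrt_eq_rpow]
    calc 1 / Real.sqrt (C ^ 2 - f x) ≤ 1 / Real.sqrt (c₂ * (b - x)) := h5
      _ = (Real.sqrt c₂)⁻¹ * (b - x) ^ (-(1/2) : ℝ) := by
          rw [h7, h6, one_div, mul_inv]
  -- Piece 2 : middle
  have I2 : IntegrableOn (fun x => 1 / Real.sqrt (C ^ 2 - f x))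
      (Set.Icc (a + δ₁) (b - δ₂)) volume := by
    have hsub : Set.Icc (a + δ₁) (b - δ₂) ⊆ Set.Ioo a b := fun x hx =>
      ⟨lt_of_lt_of_le (by linarith) hx.1, lt_of_le_of_lt hx.2 (by linarith)⟩
    exact (φcont.mono hsub).integrableOn_Icc
  -- combine
  have cover : Set.Ioo a b ⊆
      (Set.Ioo a (a + δ₁) ∪ Set.Icc (a + δ₁) (b - δ₂)) ∪ Set.Ioo (b - δ₂) b := by
    intro x hx
    by_cases h1 : x < a + δ₁
    · exact Or.inl (Or.inl ⟨hx.1, h1⟩)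
    by_cases h2 : b - δ₂ < x
    · exact Or.inr ⟨h2, hx.2⟩
    · exact Or.inl (Or.inr ⟨not_lt.1 h1, not_lt.1 h2⟩)
  exact ((I1.union I2).union I3).mono_set cover
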